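/- arXiv:1607.05246 — 2 statements merged into one kernel-verified Lean document; each statement's English description precedes it below -/
import Mathlib

section
/- For every r ≥ 1, the Favard constant K_r is a rational multiple of π^r. -/
open Real

private lemma pairSum {f : ℕ → ℝ} {S : ℝ} (hf : HasSum f S) :
    HasSum (fun k => f (2 * k) + f (2 * k + 1)) S := by
  have h1 : Summable fun k => f (2 * k) :=
    hf.summable.comp_injective fun a b h => by omega
  have h2 : Summable fun k => f (2 * k + 1) :=
    hf.summable.comp_injective fun a b h => by omega
  have h3 := h1.hasSum.even_add_odd h2.hasSum
  rw [← h3.unique hf]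
  exact h1.hasSum.add h2.hasSum

private lemma oddPart {f : ℕ → ℝ} {S A : ℝ} (hf : HasSum f S)
    (he : HasSum (fun k => f (2 * k)) A) :
    HasSum (fun k => f (2 * k + 1)) (S - A) := by
  have h2 : Summable fun k => f (2 * k + 1) :=
    hf.summable.comp_injective fun a b h => by omega
  have h4 := h2.hasSum
  have h5 := (he.even_add_odd h4).unique hf
  convert h4 using 1
  linarith

noncomputable def favardK (r : ℕ) : ℝ :=
  (4 / Real.pi) * ∑' k : ℕ,
    (1 / (4 * (k:ℝ) + 1) ^ (r + 1) + (-1) ^ (r + 1) / (4 * (k:ℝ) + 3) ^ (r + 1))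

/-- Every Favard constant `K_r` (for `r ≥ 1`) is a rational multiple of `π^r`. -/
theorem favardK_rational_multiple_of_pi_pow (r : ℕ) (hr : 1 ≤ r) :
    ∃ q : ℚ, favardK r = (q : ℝ) * Real.pi ^ r := by
  obtain ⟨q0, hq0⟩ : ∃ q0 : ℚ, HasSum (fun k : ℕ =>
      (1 / (4 * (k:ℝ) + 1) ^ (r + 1) + (-1) ^ (r + 1) / (4 * (k:ℝ) + 3) ^ (r + 1)))
      ((q0 : ℝ) * π ^ (r + 1)) := by
    rcases Nat.even_or_odd r with he | ho
    · -- r even, r = m + m, m ≥ 1; use the sine Fourier sum at x = 1/4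
      obtain ⟨m, rfl⟩ := he
      have hm : m ≠ 0 := by omega
      have hx : (1/4 : ℝ) ∈ Set.Icc (0:ℝ) 1 := by norm_num
      have H := hasSum_one_div_nat_pow_mul_sin hm hx
      have hev : HasSum
          (fun k : ℕ => 1 / ((2 * k : ℕ) : ℝ) ^ (2 * m + 1) *
            Real.sin (2 * π * ((2 * k : ℕ) : ℝ) * (1/4 : ℝ))) 0 := by
        have : (fun k : ℕ => 1 / ((2 * k : ℕ) : ℝ) ^ (2 * m + 1) *
            Real.sin (2 * π * ((2 * k : ℕ) : ℝ) * (1/4 : ℝ))) = fun _ => (0:ℝ) := by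
          funext k
          have h1 : 2 * π * ((2 * k : ℕ) : ℝ) * (1/4 : ℝ) = (k : ℝ) * π := by push_cast; ring
          rw [h1, Real.sin_nat_mul_pi, mul_zero]
        rw [this]
        exact hasSum_zero
      have hodd := oddPart H hev
      rw [sub_zero] at hodd
      have hpair := pairSum hodd
      refine ⟨(-1 : ℚ) ^ (m + 1) * 2 ^ (2 * m + 1) / 2 / (2 * m + 1).factorial *
          (Polynomial.bernoulli (2 * m + 1)).eval (1/4 : ℚ), ?_⟩
      have hfun : (fun k : ℕ =>
          1 / (4 * (k:ℝ) + 1) ^ (m + m + 1) + (-1) ^ (m + m + 1) / (4 * (k:ℝ) + 3) ^ (m + m + 1))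
          = fun k : ℕ =>
            1 / ((2 * (2 * k) + 1 : ℕ) : ℝ) ^ (2 * m + 1) *
              Real.sin (2 * π * ((2 * (2 * k) + 1 : ℕ) : ℝ) * (1/4 : ℝ)) +
            1 / ((2 * (2 * k + 1) + 1 : ℕ) : ℝ) ^ (2 * m + 1) *
              Real.sin (2 * π * ((2 * (2 * k + 1) + 1 : ℕ) : ℝ) * (1/4 : ℝ)) := by
        funext k
        have h1 : 2 * π * ((2 * (2 * k) + 1 : ℕ) : ℝ) * (1/4 : ℝ)
            = π/2 + (k:ℝ) * (2 * π) := by push_cast; ring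
        have h2 : 2 * π * ((2 * (2 * k + 1) + 1 : ℕ) : ℝ) * (1/4 : ℝ)
            = (π/2 + π) + (k:ℝ) * (2 * π) := by push_cast; ring
        have hk1 : ((k:ℝ)) * (2 * π) = ((k : ℕ) : ℝ) * (2 * π) := by norm_num
        have s1 : Real.sin (2 * π * ((2 * (2 * k) + 1 : ℕ) : ℝ) * (1/4 : ℝ)) = 1 := by
          rw [h1, hk1, Real.sin_add_nat_mul_two_pi, Real.sin_pi_div_two]
        have s2 : Real.sin (2 * π * ((2 * (2 * k + 1) + 1 : ℕ) : ℝ) * (1/4 : ℝ)) = -1 := by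
          rw [h2, hk1, Real.sin_add_nat_mul_two_pi, Real.sin_add_pi, Real.sin_pi_div_two]
        rw [s1, s2]
        have c1 : ((2 * (2 * k) + 1 : ℕ) : ℝ) = 4 * (k:ℝ) + 1 := by push_cast; ring
        have c2 : ((2 * (2 * k + 1) + 1 : ℕ) : ℝ) = 4 * (k:ℝ) + 3 := by push_cast; ring
        have hpow : (-1 : ℝ) ^ (m + m + 1) = -1 := by
          rw [pow_succ, ← two_mul]
          simp [pow_mul]
        have hexp : m + m + 1 = 2 * m + 1 := by ring
        rw [c1, c2, hpow, hexp]
        ring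
      rw [hfun]
      convert hpair using 1
      have hb : (Polynomial.map (algebraMap ℚ ℝ) (Polynomial.bernoulli (2 * m + 1))).eval
          (1/4 : ℝ) = (((Polynomial.bernoulli (2 * m + 1)).eval (1/4 : ℚ) : ℚ) : ℝ) := by
        have h4 : ((1:ℝ)/4) = algebraMap ℚ ℝ (1/4 : ℚ) := by norm_num
        rw [h4, Polynomial.eval_map, Polynomial.eval₂_at_apply]
        rfl
      rw [hb]
      have hexp : m + m + 1 = 2 * m + 1 := by ring
      rw [hexp]
      push_cast
      rw [mul_pow]
      ring
    · -- r odd, r = 2 m + 1; use ζ(2(m+1)) and remove even terms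
      obtain ⟨m, rfl⟩ := ho
      have Z := hasSum_zeta_nat (k := m + 1) (by omega)
      have hev : HasSum
          (fun k : ℕ => 1 / ((2 * k : ℕ) : ℝ) ^ (2 * (m + 1)))
          ((1 / 2 ^ (2 * (m + 1))) * ((-1 : ℝ) ^ (m + 1 + 1) * (2 : ℝ) ^ (2 * (m + 1) - 1) *
            π ^ (2 * (m + 1)) * (bernoulli (2 * (m + 1)) : ℝ) / ((2 * (m + 1)).factorial : ℝ))) := by
        have h1 := Z.mul_left ((1 : ℝ) / 2 ^ (2 * (m + 1)))
        have h2 : (fun k : ℕ => 1 / ((2 * k : ℕ) : ℝ) ^ (2 * (m + 1)))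
            = fun k : ℕ => 1 / 2 ^ (2 * (m + 1)) * (1 / (k : ℝ) ^ (2 * (m + 1))) := by
          funext k
          push_cast
          rw [mul_pow]
          ring
        rw [h2]
        exact h1
      have hodd := oddPart Z hev
      have hpair := pairSum hodd
      refine ⟨(1 - 1 / 2 ^ (2 * (m + 1))) * ((-1 : ℚ) ^ (m + 1 + 1) *
          (2 : ℚ) ^ (2 * (m + 1) - 1) * bernoulli (2 * (m + 1)) / (2 * (m + 1)).factorial), ?_⟩
      have hfun : (fun k : ℕ =>
          1 / (4 * (k:ℝ) + 1) ^ (2 * m + 1 + 1) +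
            (-1) ^ (2 * m + 1 + 1) / (4 * (k:ℝ) + 3) ^ (2 * m + 1 + 1))
          = fun k : ℕ =>
            1 / ((2 * (2 * k) + 1 : ℕ) : ℝ) ^ (2 * (m + 1)) +
            1 / ((2 * (2 * k + 1) + 1 : ℕ) : ℝ) ^ (2 * (m + 1)) := by
        funext k
        have c1 : ((2 * (2 * k) + 1 : ℕ) : ℝ) = 4 * (k:ℝ) + 1 := by push_cast; ring
        have c2 : ((2 * (2 * k + 1) + 1 : ℕ) : ℝ) = 4 * (k:ℝ) + 3 := by push_cast; ring
        have hpow : (-1 : ℝ) ^ (2 * m + 1 + 1) = 1 := by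
          rw [show 2 * m + 1 + 1 = 2 * (m + 1) by ring, pow_mul]
          simp
        have hexp : 2 * m + 1 + 1 = 2 * (m + 1) := by ring
        rw [c1, c2, hpow, hexp]
      rw [hfun]
      convert hpair using 1
      have hexp : 2 * m + 1 + 1 = 2 * (m + 1) := by ring
      rw [hexp]
      push_cast
      ring
  refine ⟨4 * q0, ?_⟩
  rw [favardK, hq0.tsum_eq]
  have hπ : π ≠ 0 := Real.pi_ne_zero
  rw [pow_succ]
  push_cast
  field_simp
end

section
/- For all natural numbers n, m ≥ 1 and 0 < h ≤ 1/(2mn), the best L¹ approximation of χ_h^m by trigonometric polynomials of degree ≤ n−1 equals 1: E_{n−1}(χ_h^m)_{L¹} = 1. -/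
open MeasureTheory Set intervalIntegral

noncomputable def chi (h : ℝ) : ℝ → ℝ := fun θ =>
  if |θ - 2 * Real.pi * (round (θ / (2 * Real.pi)) : ℤ)| ≤ Real.pi * h then 1 / h else 0

local notation "π" => Real.pi

lemma two_pi_pos : (0:ℝ) < 2*π := by positivity

lemma round_dist_le (θ : ℝ) (j : ℤ) :
    |θ - 2*π*(round (θ/(2*π)) : ℤ)| ≤ |θ - 2*π*j| := by
  have h1 := round_le (θ/(2*π)) j
  have h2 : ∀ k : ℤ, |θ - 2*π*k| = (2*π) * |θ/(2*π) - k| := by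
    intro k
    rw [← abs_of_pos two_pi_pos, ← abs_mul, abs_of_pos two_pi_pos]
    congr 1
    have hne : (2*π) ≠ 0 := two_pi_pos.ne'
    field_simp
  rw [h2, h2]
  exact mul_le_mul_of_nonneg_left h1 two_pi_pos.le

def Kset (h : ℝ) : Set ℝ := ⋃ j : ℤ, Icc (2*π*j - π*h) (2*π*j + π*h)

lemma mem_Kset_iff {h θ : ℝ} : θ ∈ Kset h ↔ ∃ j : ℤ, |θ - 2*π*j| ≤ π*h := by
  simp only [Kset, Set.mem_iUnion, mem_Icc, abs_le]
  constructor
  · rintro ⟨j, h1, h2⟩; exact ⟨j, by linarith, by linarith⟩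
  · rintro ⟨j, h1, h2⟩; exact ⟨j, by linarith, by linarith⟩

lemma chi_eq_indicator (h : ℝ) :
    chi h = Set.indicator (Kset h) (fun _ => 1/h) := by
  classical
  funext θ
  by_cases hc : θ ∈ Kset h
  · rw [Set.indicator_of_mem hc]
    obtain ⟨j, hj⟩ := mem_Kset_iff.1 hc
    unfold chi
    rw [if_pos ((round_dist_le θ j).trans hj)]
  · rw [Set.indicator_of_notMem hc]
    unfold chi
    rw [if_neg]
    intro hcon
    exact hc (mem_Kset_iff.2 ⟨_, hcon⟩)

lemma chi_measurable (h : ℝ) : Measurable (chi h) := by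
  rw [chi_eq_indicator h]
  exact (measurable_const (a := 1/h)).indicator (MeasurableSet.iUnion fun j => measurableSet_Icc)

lemma chi_nonneg (h : ℝ) (hh : 0 < h) (θ : ℝ) : 0 ≤ chi h θ := by
  unfold chi; split <;> positivity

lemma chi_le (h : ℝ) (hh : 0 < h) (θ : ℝ) : chi h θ ≤ 1/h := by
  unfold chi; split
  · exact le_refl _
  · positivity

lemma chi_periodic (h : ℝ) : Function.Periodic (chi h) (2*π) := by
  intro θ
  unfold chi
  have : (θ + 2*π) / (2*π) = θ/(2*π) + 1 := by field_simp
  rw [this, round_add_one]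
  congr 2
  push_cast
  ring_nf

lemma chi_supported {h θ : ℝ} (hne : chi h θ ≠ 0) : ∃ j : ℤ, |θ - 2*π*j| ≤ π*h := by
  by_contra hc
  push_neg at hc
  apply hne
  unfold chi
  rw [if_neg]
  exact fun hcon => absurd hcon (not_le.2 (hc _))

lemma chi_integral (h : ℝ) (hh : 0 < h) (hh1 : h < 1) :
    ∫ θ in (0:ℝ)..(2*π), chi h θ = 2*π := by
  have h1 : ∫ θ in (0:ℝ)..(2*π), chi h θ = ∫ θ in (-π)..(-π + 2*π), chi h θ := by
    rw [(chi_periodic h).intervalIntegral_add_eq (-π) 0]; norm_num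
  have h2 : (-π + 2*π) = π := by ring
  rw [h1, h2]
  -- on [-π, π], chi h agrees with the indicator of Icc (-(π*h)) (π*h)
  have hph : π*h < π := by nlinarith [Real.pi_pos]
  have heq : ∀ θ ∈ Set.uIcc (-π) π, chi h θ = Set.indicator (Icc (-(π*h)) (π*h)) (fun _ => 1/h) θ := by
    intro θ hθ
    rw [Set.uIcc_of_le (by linarith [Real.pi_pos] : -π ≤ π), mem_Icc] at hθ
    rw [chi_eq_indicator h]
    by_cases hc : |θ| ≤ π*h
    · rw [Set.indicator_of_mem, Set.indicator_of_mem]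
      · rw [mem_Icc]; rw [abs_le] at hc; exact hc
      · exact mem_Kset_iff.2 ⟨0, by push_cast; simpa using hc⟩
    · rw [Set.indicator_of_notMem, Set.indicator_of_notMem]
      · rw [mem_Icc]; rw [abs_le] at hc; push_neg at hc ⊢
        intro hc1; rcases lt_or_ge θ (-(π*h)) with hl | hl
        · exact absurd hl (not_lt.2 hc1)
        · exact (hc hl)
      · intro hmem
        obtain ⟨j, hj⟩ := mem_Kset_iff.1 hmem
        -- |θ - 2πj| ≤ πh < π and |θ| ≤ π force j = 0
        have habs : |θ| ≤ π := abs_le.2 hθ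
        have hj0 : j = 0 := by
          by_contra hj0
          have : (1:ℝ) ≤ |(j:ℝ)| := by
            have : (1:ℤ) ≤ |j| := Int.one_le_abs (by exact_mod_cast hj0)
            exact_mod_cast this
          have h2pij : 2*π ≤ |2*π*j| := by
            rw [abs_mul, abs_of_pos two_pi_pos]
            nlinarith [two_pi_pos]
          have : |2*π*(j:ℝ)| ≤ |θ - 2*π*j| + |θ| := by
            have := abs_sub_abs_le_abs_sub (2*π*(j:ℝ)) θ
            have h3 := abs_sub_comm θ (2*π*(j:ℝ))
            rw [← h3] at this
            linarith [abs_nonneg θ, abs_sub_abs_le_abs_sub (2*π*(j:ℝ)) θ, abs_sub_comm (2*π*(j:ℝ)) θ]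
          nlinarith [Real.pi_pos]
        rw [hj0] at hj
        push_cast at hj
        simp at hj
        exact hc hj
  rw [intervalIntegral.integral_congr heq]
  have hle : -(π*h) ≤ π*h := by nlinarith [Real.pi_pos]
  rw [intervalIntegral.integral_of_le (by linarith [Real.pi_pos] : -π ≤ π),
      MeasureTheory.integral_indicator measurableSet_Icc]
  rw [Measure.restrict_restrict measurableSet_Icc]
  have hinter : Icc (-(π*h)) (π*h) ∩ Ioc (-π) π = Icc (-(π*h)) (π*h) := by
    apply Set.inter_eq_self_of_subset_left
    intro x hx
    rw [mem_Icc] at hx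
    exact ⟨by linarith [hx.1], by linarith [hx.2]⟩
  rw [hinter, setIntegral_const, Real.volume_real_Icc_of_le hle]
  have : π*h - -(π*h) = 2*π*h := by ring
  rw [this, smul_eq_mul]
  field_simp

/-- Convolution on the circle, normalized by \`1/(2π)\`. -/
noncomputable def conv (f g : ℝ → ℝ) : ℝ → ℝ := fun θ =>
  (1 / (2 * Real.pi)) * ∫ φ in (0:ℝ)..(2 * Real.pi), f (θ - φ) * g φ

lemma bdd_intervalIntegrable {f : ℝ → ℝ} (hf : Measurable f) (C : ℝ)
    (hC : ∀ x, |f x| ≤ C) (a b : ℝ) : IntervalIntegrable f volume a b := by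
  rw [intervalIntegrable_iff]
  haveI : IsFiniteMeasure (volume.restrict (Set.uIoc a b)) :=
    ⟨by rw [Measure.restrict_apply_univ]; exact measure_Ioc_lt_top⟩
  exact (integrable_const C).mono' hf.aestronglyMeasurable (ae_of_all _ hC)

lemma periodic_shift_integral {F : ℝ → ℝ} (hF : Function.Periodic F (2*π)) (c : ℝ) :
    ∫ φ in (0:ℝ)..(2*π), F (φ + c) = ∫ φ in (0:ℝ)..(2*π), F φ := by
  rw [intervalIntegral.integral_comp_add_right]
  have h1 : (0:ℝ) + c = c := by ring
  have h2 : 2*π + c = c + 2*π := by ring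
  rw [h1, h2, hF.intervalIntegral_add_eq c 0]
  norm_num

lemma integral_chi_shift (h : ℝ) (hh : 0 < h) (hh1 : h < 1) (θ : ℝ) :
    ∫ φ in (0:ℝ)..(2*π), chi h (θ - φ) = 2*π := by
  rw [intervalIntegral.integral_comp_sub_left (chi h) θ]
  have h1 : θ - 2*π + 2*π = θ - 0 := by ring
  rw [show θ - 2*π = θ - 2*π from rfl]
  have := (chi_periodic h).intervalIntegral_add_eq (θ - 2*π) 0
  rw [h1] at this
  rw [this]
  norm_num
  exact chi_integral h hh hh1

lemma integral_chi_shift' (h : ℝ) (hh : 0 < h) (hh1 : h < 1) (φ : ℝ) :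
    ∫ θ in (0:ℝ)..(2*π), chi h (θ - φ) = 2*π := by
  rw [intervalIntegral.integral_comp_sub_right (chi h) φ]
  have hper := (chi_periodic h).intervalIntegral_add_eq (0 - φ) 0
  have he : 0 - φ + 2*π = 2*π - φ := by ring
  rw [he] at hper
  rw [hper]
  norm_num
  exact chi_integral h hh hh1

structure Good (h : ℝ) (k : ℕ) (g : ℝ → ℝ) : Prop where
  meas : Measurable g
  nonneg : ∀ θ, 0 ≤ g θ
  bdd : ∀ θ, g θ ≤ 1/h
  per : Function.Periodic g (2*π)
  intg : ∫ θ in (0:ℝ)..(2*π), g θ = 2*π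
  supp : ∀ θ, g θ ≠ 0 → ∃ j : ℤ, |θ - 2*π*j| ≤ π*(k*h)

lemma good_chi (h : ℝ) (hh : 0 < h) (hh1 : h < 1) : Good h 1 (chi h) where
  meas := chi_measurable h
  nonneg := chi_nonneg h hh
  bdd := chi_le h hh
  per := chi_periodic h
  intg := chi_integral h hh hh1
  supp := fun θ hne => by simpa using chi_supported hne

lemma good_abs_le {h : ℝ} {k : ℕ} {g : ℝ → ℝ} (hg : Good h k g) (hh : 0 < h) (θ : ℝ) :
    |g θ| ≤ 1/h := by
  rw [abs_of_nonneg (hg.nonneg θ)]; exact hg.bdd θ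

lemma good_step {h : ℝ} {k : ℕ} {g : ℝ → ℝ} (hh : 0 < h) (hh1 : h < 1)
    (hg : Good h k g) : Good h (k+1) (conv (chi h) g) := by
  have habs := good_abs_le hg hh
  have hchiabs : ∀ x, |chi h x| ≤ 1/h := fun x => by
    rw [abs_of_nonneg (chi_nonneg h hh x)]; exact chi_le h hh x
  -- integrability of integrand
  have hint : ∀ θ a b, IntervalIntegrable (fun φ => chi h (θ - φ) * g φ) volume a b := by
    intro θ a b
    apply bdd_intervalIntegrable
    · exact ((chi_measurable h).comp (measurable_const.sub measurable_id)).mul hg.meas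
    · intro x
      rw [abs_mul]
      calc |chi h (θ - x)| * |g x| ≤ (1/h) * (1/h) :=
        mul_le_mul (hchiabs _) (habs _) (abs_nonneg _) (by positivity)
      _ = 1/(h*h) := by field_simp
  have hintc : ∀ θ a b, IntervalIntegrable (fun φ => chi h (θ - φ) * (1/h)) volume a b := by
    intro θ a b
    apply bdd_intervalIntegrable
    · exact ((chi_measurable h).comp (measurable_const.sub measurable_id)).mul measurable_const
    · intro x
      rw [abs_mul]
      exact mul_le_mul (hchiabs _) (le_abs_self _) (by positivity) (by positivity)
  constructor
  · -- measurability
    unfold conv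
    apply Measurable.const_mul
    have : ∀ θ, (∫ φ in (0:ℝ)..(2*π), chi h (θ - φ) * g φ)
        = ∫ φ in Ioc (0:ℝ) (2*π), chi h (θ - φ) * g φ := fun θ =>
      intervalIntegral.integral_of_le two_pi_pos.le
    simp only [this]
    have hm : StronglyMeasurable (Function.uncurry fun θ φ => chi h (θ - φ) * g φ) := by
      apply Measurable.stronglyMeasurable
      exact ((chi_measurable h).comp (measurable_fst.sub measurable_snd)).mul
        (hg.meas.comp measurable_snd)
    exact (hm.integral_prod_right').measurable
  · -- nonneg
    intro θ
    unfold conv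
    apply mul_nonneg (by positivity)
    apply intervalIntegral.integral_nonneg two_pi_pos.le
    intro φ _
    exact mul_nonneg (chi_nonneg h hh _) (hg.nonneg _)
  · -- bounded by 1/h
    intro θ
    unfold conv
    rw [show (1:ℝ)/h = (1/(2*π)) * ((1/h) * (2*π)) by field_simp]
    apply mul_le_mul_of_nonneg_left _ (by positivity)
    calc ∫ φ in (0:ℝ)..(2*π), chi h (θ - φ) * g φ
        ≤ ∫ φ in (0:ℝ)..(2*π), chi h (θ - φ) * (1/h) := by
          apply intervalIntegral.integral_mono_on two_pi_pos.le (hint θ 0 _) (hintc θ 0 _)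
          intro φ _
          exact mul_le_mul_of_nonneg_left (hg.bdd φ) (chi_nonneg h hh _)
      _ = (∫ φ in (0:ℝ)..(2*π), chi h (θ - φ)) * (1/h) := by
          rw [← intervalIntegral.integral_mul_const]
      _ = (1/h) * (2*π) := by rw [integral_chi_shift h hh hh1]; ring
  · -- periodic
    intro θ
    unfold conv
    congr 1
    apply intervalIntegral.integral_congr
    intro φ _
    simp only []
    have h1 : θ + 2*π - φ = (θ - φ) + 2*π := by ring
    rw [h1, chi_periodic h (θ - φ)]
  · -- integral
    have hIoc : ∀ (F : ℝ → ℝ), (∫ x in (0:ℝ)..(2*π), F x) = ∫ x in Ioc (0:ℝ) (2*π), F x :=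
      fun F => intervalIntegral.integral_of_le two_pi_pos.le
    unfold conv
    rw [intervalIntegral.integral_const_mul]
    have hswap : (∫ θ in (0:ℝ)..(2*π), ∫ φ in (0:ℝ)..(2*π), chi h (θ-φ) * g φ)
        = ∫ φ in (0:ℝ)..(2*π), ∫ θ in (0:ℝ)..(2*π), chi h (θ-φ) * g φ := by
      rw [hIoc]
      rw [hIoc (fun φ => ∫ θ in (0:ℝ)..(2*π), chi h (θ-φ) * g φ)]
      simp only [hIoc]
      apply MeasureTheory.integral_integral_swap
      haveI i1 : IsFiniteMeasure (volume.restrict (Ioc (0:ℝ) (2*π))) :=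
        ⟨by rw [Measure.restrict_apply_univ]; exact measure_Ioc_lt_top⟩
      apply MeasureTheory.Integrable.mono' (g := fun _ => 1/(h*h)) (integrable_const _)
      · exact (((chi_measurable h).comp (measurable_fst.sub measurable_snd)).mul
          (hg.meas.comp measurable_snd)).aestronglyMeasurable
      · apply ae_of_all
        rintro ⟨θ, φ⟩
        simp only [Function.uncurry]
        rw [Real.norm_eq_abs, abs_mul]
        calc |chi h (θ - φ)| * |g φ| ≤ (1/h) * (1/h) :=
          mul_le_mul (hchiabs _) (habs _) (abs_nonneg _) (by positivity)
        _ = 1/(h*h) := by field_simp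
    rw [hswap]
    have hinner : ∀ φ, (∫ θ in (0:ℝ)..(2*π), chi h (θ-φ) * g φ) = 2*π * g φ := by
      intro φ
      rw [intervalIntegral.integral_mul_const, integral_chi_shift' h hh hh1 φ]
    simp only [hinner]
    rw [intervalIntegral.integral_const_mul, hg.intg]
    field_simp
  · -- support
    intro θ hne
    by_contra hc
    push_neg at hc
    apply hne
    unfold conv
    have : ∀ φ, chi h (θ - φ) * g φ = 0 := by
      intro φ
      rcases eq_or_ne (g φ) 0 with hgz | hgz
      · rw [hgz, mul_zero]
      rcases eq_or_ne (chi h (θ - φ)) 0 with hcz | hcz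
      · rw [hcz, zero_mul]
      exfalso
      obtain ⟨j1, hj1⟩ := chi_supported hcz
      obtain ⟨j2, hj2⟩ := hg.supp φ hgz
      have hkey : |θ - 2*π*(j1 + j2)| ≤ π*((k+1)*h) := by
        have : θ - 2*π*(j1+j2) = (θ - φ - 2*π*j1) + (φ - 2*π*j2) := by push_cast; ring
        rw [this]
        calc |(θ - φ - 2*π*j1) + (φ - 2*π*j2)| ≤ |θ - φ - 2*π*j1| + |φ - 2*π*j2| := abs_add_le _ _
          _ ≤ π*h + π*(k*h) := add_le_add hj1 hj2
          _ = π*((k+1)*h) := by push_cast; ring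
      exact absurd hkey (not_le.2 (by exact_mod_cast hc (j1+j2)))
    simp only [this]
    simp

/-- \`chiConv h m\` is the \`m\`-fold self-convolution \`χ_h ∗ ⋯ ∗ χ_h\` (for \`m ≥ 1\`). -/
noncomputable def chiConv (h : ℝ) : ℕ → ℝ → ℝ
  | 0 => fun _ => 0
  | 1 => chi h
  | (m + 2) => conv (chi h) (chiConv h (m + 1))

lemma good_chiConv (h : ℝ) (hh : 0 < h) (hh1 : h < 1) :
    ∀ m : ℕ, Good h (m+1) (chiConv h (m+1)) := by
  intro m
  induction m with
  | zero => exact good_chi h hh hh1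
  | succ k ih => exact good_step hh hh1 ih

noncomputable def sgn (n : ℕ) : ℝ → ℝ := fun θ => if 0 ≤ Real.cos (n*θ) then 1 else -1

lemma sgn_measurable (n : ℕ) : Measurable (sgn n) := by
  unfold sgn
  apply Measurable.ite _ measurable_const measurable_const
  exact measurableSet_le measurable_const (Real.continuous_cos.comp (continuous_const.mul continuous_id)).measurable

lemma sgn_abs (n : ℕ) (θ : ℝ) : |sgn n θ| ≤ 1 := by
  unfold sgn; split <;> simp

lemma sgn_periodic (n : ℕ) : Function.Periodic (sgn n) (2*π) := by
  intro θ
  unfold sgn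
  congr 1
  have : (n:ℝ) * (θ + 2*π) = n*θ + (n:ℤ) * (2*π) := by push_cast; ring
  rw [this, Real.cos_add_int_mul_two_pi]

lemma sgn_anti (n : ℕ) (hn : 1 ≤ n) (θ : ℝ) (hz : Real.cos (n*θ) ≠ 0) :
    sgn n (θ + π/n) = - sgn n θ := by
  have hn0 : (n:ℝ) ≠ 0 := Nat.cast_ne_zero.2 (by omega)
  have hcos : Real.cos ((n:ℝ)*(θ + π/n)) = - Real.cos (n*θ) := by
    have : (n:ℝ)*(θ + π/n) = n*θ + π := by field_simp
    rw [this, Real.cos_add_pi]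
  unfold sgn
  rw [hcos]
  rcases lt_or_gt_of_ne hz with hlt | hgt
  · rw [if_pos (by linarith), if_neg (by linarith)]
    norm_num
  · rw [if_neg (by linarith), if_pos (by linarith)]

def Zset (n : ℕ) : Set ℝ := {θ : ℝ | Real.cos (n*θ) = 0}

lemma Zset_measure_zero (n : ℕ) (hn : 1 ≤ n) : volume (Zset n) = 0 := by
  have hn0 : (n:ℝ) ≠ 0 := Nat.cast_ne_zero.2 (by omega)
  have hsub : Zset n ⊆ Set.range (fun j : ℤ => ((2*(j:ℝ)+1) * (π/2)) / n) := by
    intro θ hθ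
    rw [Zset, Set.mem_setOf_eq, Real.cos_eq_zero_iff] at hθ
    obtain ⟨j, hj⟩ := hθ
    refine ⟨j, ?_⟩
    field_simp at hj ⊢
    linear_combination -hj
  exact measure_mono_null hsub ((Set.countable_range _).measure_zero volume)

lemma bdd_intervalIntegrableC {f : ℝ → ℂ} (hf : Measurable f) (C : ℝ)
    (hC : ∀ x, ‖f x‖ ≤ C) (a b : ℝ) : IntervalIntegrable f volume a b := by
  rw [intervalIntegrable_iff]
  haveI : IsFiniteMeasure (volume.restrict (Set.uIoc a b)) :=
    ⟨by rw [Measure.restrict_apply_univ]; exact measure_Ioc_lt_top⟩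
  exact (integrable_const C).mono' hf.aestronglyMeasurable (ae_of_all _ hC)

lemma periodic_shift_integralC {F : ℝ → ℂ} (hF : Function.Periodic F (2*π)) (c : ℝ) :
    ∫ φ in (0:ℝ)..(2*π), F (φ + c) = ∫ φ in (0:ℝ)..(2*π), F φ := by
  rw [intervalIntegral.integral_comp_add_right]
  have h1 : (0:ℝ) + c = c := by ring
  have h2 : 2*π + c = c + 2*π := by ring
  rw [h1, h2, hF.intervalIntegral_add_eq c 0]
  norm_num

lemma norm_exp_mul_I (k : ℤ) (θ : ℝ) : ‖Complex.exp ((k:ℂ) * (θ:ℂ) * Complex.I)‖ = 1 := by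
  have : (k:ℂ) * (θ:ℂ) = ((k*θ : ℝ) : ℂ) := by push_cast; ring
  rw [this]
  exact Complex.norm_exp_ofReal_mul_I _

lemma exp_sgn_integral (n : ℕ) (hn : 1 ≤ n) (k : ℤ) (hk : |k| < n) :
    ∫ θ in (0:ℝ)..(2*π), Complex.exp ((k:ℂ) * (θ:ℂ) * Complex.I) * (sgn n θ : ℂ) = 0 := by
  have hn0 : (n:ℝ) ≠ 0 := Nat.cast_ne_zero.2 (by omega)
  set F : ℝ → ℂ := fun θ => Complex.exp ((k:ℂ) * (θ:ℂ) * Complex.I) * (sgn n θ : ℂ) with hFdef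
  have hFper : Function.Periodic F (2*π) := by
    intro θ
    simp only [hFdef]
    rw [sgn_periodic n θ]
    have h1 : (k:ℂ) * ((θ + 2*π : ℝ):ℂ) * Complex.I
        = (k:ℂ)*(θ:ℂ)*Complex.I + (k:ℂ)*(2*π*Complex.I) := by push_cast; ring
    rw [h1, Complex.exp_add, Complex.exp_int_mul_two_pi_mul_I, mul_one]
  set e : ℂ := Complex.exp ((k:ℂ) * ((π:ℂ)/(n:ℂ)) * Complex.I) with hedef
  set I : ℂ := ∫ θ in (0:ℝ)..(2*π), F θ with hIdef
  have hshift : ∫ θ in (0:ℝ)..(2*π), F (θ + π/n) = I := periodic_shift_integralC hFper _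
  have hae : ∀ᵐ θ : ℝ, θ ∈ Set.uIoc (0:ℝ) (2*π) → F (θ + π/n) = -e * F θ := by
    have hz : ∀ᵐ θ : ℝ, θ ∉ Zset n := by
      rw [MeasureTheory.ae_iff]
      convert Zset_measure_zero n hn using 2
      simp [Zset]
    filter_upwards [hz] with θ hθ _
    have hcz : Real.cos (n*θ) ≠ 0 := hθ
    simp only [hFdef]
    rw [sgn_anti n hn θ hcz]
    push_cast
    rw [show (k:ℂ) * ((θ:ℂ) + (π:ℂ)/(n:ℂ)) * Complex.I
        = (k:ℂ)*(θ:ℂ)*Complex.I + (k:ℂ)*((π:ℂ)/(n:ℂ))*Complex.I by ring,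
      Complex.exp_add, ← hedef]
    ring
  have heq : ∫ θ in (0:ℝ)..(2*π), F (θ + π/n) = ∫ θ in (0:ℝ)..(2*π), (-e) * F θ :=
    intervalIntegral.integral_congr_ae hae
  rw [heq, intervalIntegral.integral_const_mul, ← hIdef] at hshift
  have hkey : (1 + e) * I = 0 := by linear_combination -hshift
  have hene : (1:ℂ) + e ≠ 0 := by
    intro hcon
    have he : e = -1 := by linear_combination hcon
    set t : ℝ := (k:ℝ) * π / n with htdef
    have hcast : (k:ℂ) * ((π:ℂ)/(n:ℂ)) * Complex.I = (t:ℂ) * Complex.I := by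
      simp only [htdef]; push_cast; ring
    rw [hedef, hcast] at he
    have hre : Real.cos t = -1 := by
      have := congrArg Complex.re he
      rwa [Complex.exp_ofReal_mul_I_re] at this
    have ht : |t| < π := by
      rw [htdef, abs_div, abs_mul, abs_of_pos Real.pi_pos, abs_of_pos (by positivity : (0:ℝ) < (n:ℝ))]
      rw [div_lt_iff₀ (by positivity)]
      have : |(k:ℝ)| < (n:ℝ) := by exact_mod_cast hk
      nlinarith [Real.pi_pos]
    have hcoshalf : Real.cos (t/2) > 0 := by
      apply Real.cos_pos_of_mem_Ioo
      constructor
      · rw [abs_lt] at ht; linarith [ht.1]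
      · rw [abs_lt] at ht; linarith [ht.2]
    have hsq : Real.cos (t/2)^2 = 0 := by
      rw [Real.cos_sq, show 2*(t/2) = t by ring, hre]; ring
    nlinarith [hcoshalf]
  rcases mul_eq_zero.1 hkey with hc | hc
  · exact absurd hc hene
  · exact hc

/-- Trigonometric polynomials of degree at most \`n\` (complex coefficients). -/
def trigPoly (n : ℕ) : Set (ℝ → ℂ) :=
  {t | ∃ c : ℤ → ℂ, t = fun θ : ℝ =>
    ∑ k ∈ Finset.Icc (-(n:ℤ)) (n:ℤ), c k * Complex.exp (k * (θ:ℂ) * Complex.I)}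

noncomputable def L1norm (f : ℝ → ℂ) : ℝ :=
  (1 / (2 * Real.pi)) * ∫ φ in (0:ℝ)..(2 * Real.pi), ‖f φ‖

/-- Best approximation in \`L¹(𝕋)\` by trigonometric polynomials of degree at most \`n\`. -/
noncomputable def bestApprox (n : ℕ) (f : ℝ → ℂ) : ℝ :=
  sInf ((fun t : ℝ → ℂ => L1norm (fun θ => f θ - t θ)) '' (trigPoly n))

lemma L1norm_nonneg (f : ℝ → ℂ) : 0 ≤ L1norm f := by
  unfold L1norm
  apply mul_nonneg (by positivity)
  apply intervalIntegral.integral_nonneg two_pi_pos.le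
  intro u _
  exact norm_nonneg _

/-- For `0 < h ≤ 1/(2mn)`, `E_{n−1}(χ_h^m)_{L¹} = 1`. -/
theorem bestApprox_chiConv_eq_one (n m : ℕ) (hn : 1 ≤ n) (hm : 1 ≤ m) (h : ℝ)
    (h0 : 0 < h) (hup : h ≤ 1 / (2 * (m:ℝ) * (n:ℝ))) :
    bestApprox (n - 1) (fun θ => (chiConv h m θ : ℂ)) = 1 := by
  have hmR : (1:ℝ) ≤ (m:ℝ) := by exact_mod_cast hm
  have hnR : (1:ℝ) ≤ (n:ℝ) := by exact_mod_cast hn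
  have hmn : (2:ℝ) ≤ 2*(m:ℝ)*(n:ℝ) := by nlinarith
  have hh1 : h < 1 := by
    have : (1:ℝ)/(2*(m:ℝ)*(n:ℝ)) ≤ 1/2 := by
      apply div_le_div_of_nonneg_left (by norm_num) (by norm_num) hmn
    linarith
  obtain ⟨m', rfl⟩ : ∃ m', m = m' + 1 := ⟨m - 1, by omega⟩
  have hg : Good h (m'+1) (chiConv h (m'+1)) := good_chiConv h h0 hh1 m'
  set f : ℝ → ℝ := chiConv h (m'+1) with hfdef
  set fC : ℝ → ℂ := fun θ => (f θ : ℂ) with hfCdef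
  set m : ℕ := m' + 1
  have hfCmeas : Measurable fC := Complex.measurable_ofReal.comp hg.meas
  have hfCnorm : ∀ θ, ‖fC θ‖ = f θ := by
    intro θ
    simp only [hfCdef, Complex.norm_real, Real.norm_eq_abs]
    exact abs_of_nonneg (hg.nonneg θ)
  -- the measure-zero-degree polynomial bound
  have hmain : ∀ x ∈ (fun t : ℝ → ℂ => L1norm (fun θ => fC θ - t θ)) '' (trigPoly (n-1)),
      1 ≤ x := by
    rintro x ⟨t, ⟨c, rfl⟩, rfl⟩
    set N : ℕ := n - 1 with hNdef
    set t : ℝ → ℂ := fun θ : ℝ =>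
      ∑ k ∈ Finset.Icc (-(N:ℤ)) (N:ℤ), c k * Complex.exp (k * (θ:ℂ) * Complex.I) with htdef
    set σ : ℝ → ℝ := sgn n with hσdef
    have hσabs := sgn_abs n
    have hσmeas := sgn_measurable n
    -- t is measurable and globally bounded
    have htmeas : Measurable t := by
      apply Finset.measurable_sum
      intro k _
      apply Measurable.const_mul
      exact Complex.measurable_exp.comp
        ((measurable_const.mul Complex.measurable_ofReal).mul measurable_const)
    set Ct : ℝ := ∑ k ∈ Finset.Icc (-(N:ℤ)) (N:ℤ), ‖c k‖ with hCtdef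
    have htbdd : ∀ θ, ‖t θ‖ ≤ Ct := by
      intro θ
      calc ‖t θ‖ ≤ ∑ k ∈ Finset.Icc (-(N:ℤ)) (N:ℤ), ‖c k * Complex.exp (k * (θ:ℂ) * Complex.I)‖ :=
            norm_sum_le _ _
        _ = Ct := by
            apply Finset.sum_congr rfl
            intro k _
            rw [norm_mul, norm_exp_mul_I, mul_one]
    -- σ = 1 on the support of f
    have hfσ : ∀ θ, (f θ : ℂ) * (σ θ : ℂ) = (f θ : ℂ) := by
      intro θ
      rcases eq_or_ne (f θ) 0 with hz | hz
      · rw [hz]; simp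
      obtain ⟨j, hj⟩ := hg.supp θ hz
      have hσ1 : σ θ = 1 := by
        have hcos : Real.cos (n*θ) = Real.cos ((n:ℝ)*(θ - 2*π*j)) := by
          have : (n:ℝ)*θ = (n:ℝ)*(θ - 2*π*j) + ((n*j : ℤ) : ℝ) * (2*π) := by push_cast; ring
          rw [this, Real.cos_add_int_mul_two_pi]
        have hbound : |(n:ℝ)*(θ - 2*π*j)| ≤ π/2 := by
          rw [abs_mul, abs_of_nonneg (by positivity : (0:ℝ) ≤ (n:ℝ))]
          have h1 : |θ - 2*π*j| ≤ π*(m*h) := hj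
          have h2 : (n:ℝ) * (π*(m*h)) ≤ π/2 := by
            have : (m:ℝ)*(n:ℝ)*h ≤ 1/2 := by
              have hpos : (0:ℝ) < 2*(m:ℝ)*(n:ℝ) := by nlinarith
              have h2 : h * (2*(m:ℝ)*(n:ℝ)) ≤ 1 := (le_div_iff₀ hpos).1 hup
              nlinarith
            nlinarith [Real.pi_pos]
          calc (n:ℝ) * |θ - 2*π*j| ≤ (n:ℝ) * (π*(m*h)) :=
              mul_le_mul_of_nonneg_left h1 (by positivity)
            _ ≤ π/2 := h2
        have hc : 0 ≤ Real.cos (n*θ) := by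
          rw [hcos]
          apply Real.cos_nonneg_of_mem_Icc
          rw [abs_le] at hbound
          exact ⟨hbound.1, hbound.2⟩
        simp only [hσdef, sgn, if_pos hc]
      rw [hσ1]; simp
    -- integrability facts
    have hsubmeas : Measurable (fun θ => fC θ - t θ) := hfCmeas.sub htmeas
    have hsubbdd : ∀ θ, ‖fC θ - t θ‖ ≤ 1/h + Ct := by
      intro θ
      calc ‖fC θ - t θ‖ ≤ ‖fC θ‖ + ‖t θ‖ := norm_sub_le _ _
        _ ≤ 1/h + Ct := add_le_add (by rw [hfCnorm]; exact hg.bdd θ) (htbdd θ)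
    have hint1 : IntervalIntegrable (fun θ => ‖fC θ - t θ‖) volume 0 (2*π) := by
      apply bdd_intervalIntegrable (hsubmeas.norm) (1/h + Ct)
      intro x; rw [abs_of_nonneg (norm_nonneg _)]; exact hsubbdd x
    have hint2 : IntervalIntegrable (fun θ => ‖(fC θ - t θ) * (σ θ : ℂ)‖) volume 0 (2*π) := by
      refine bdd_intervalIntegrable (f := fun θ => ‖(fC θ - t θ) * ((σ θ : ℝ) : ℂ)‖)
        ?_ (1/h + Ct) ?_ 0 (2*π)
      · exact (hsubmeas.mul (Complex.measurable_ofReal.comp hσmeas)).norm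
      intro x
      simp only [abs_norm, norm_mul, Complex.norm_real, Real.norm_eq_abs]
      rw [abs_of_nonneg (mul_nonneg (norm_nonneg _) (abs_nonneg _))]
      calc ‖fC x - t x‖ * |σ x| ≤ (1/h + Ct) * 1 :=
          mul_le_mul (hsubbdd x) (hσabs x) (abs_nonneg _) (by positivity : (0:ℝ) ≤ 1/h + Ct)
        _ = 1/h + Ct := mul_one _
    have hintfσ : IntervalIntegrable (fun θ => fC θ * (σ θ : ℂ)) volume 0 (2*π) := by
      refine bdd_intervalIntegrableC (f := fun θ => fC θ * ((σ θ : ℝ) : ℂ))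
        ?_ (1/h) ?_ 0 (2*π)
      · exact hfCmeas.mul (Complex.measurable_ofReal.comp hσmeas)
      intro x
      simp only [norm_mul, Complex.norm_real, Real.norm_eq_abs]
      calc ‖fC x‖ * |σ x| ≤ (1/h) * 1 :=
          mul_le_mul (by rw [hfCnorm]; exact hg.bdd x) (hσabs x) (abs_nonneg _) (by positivity)
        _ = 1/h := mul_one _
    have hinttσ : IntervalIntegrable (fun θ => t θ * (σ θ : ℂ)) volume 0 (2*π) := by
      refine bdd_intervalIntegrableC (f := fun θ => t θ * ((σ θ : ℝ) : ℂ))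
        ?_ Ct ?_ 0 (2*π)
      · exact htmeas.mul (Complex.measurable_ofReal.comp hσmeas)
      intro x
      simp only [norm_mul, Complex.norm_real, Real.norm_eq_abs]
      calc ‖t x‖ * |σ x| ≤ Ct * 1 :=
          mul_le_mul (htbdd x) (hσabs x) (abs_nonneg _) (le_trans (norm_nonneg _) (htbdd x))
        _ = Ct := mul_one _
    -- the three integral computations
    have hIfσ : ∫ θ in (0:ℝ)..(2*π), fC θ * (σ θ : ℂ) = ((2*π : ℝ) : ℂ) := by
      have : ∀ θ, fC θ * (σ θ : ℂ) = fC θ := hfσ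
      simp only [this]
      rw [hfCdef]
      rw [intervalIntegral.integral_ofReal, hg.intg]
    have hItσ : ∫ θ in (0:ℝ)..(2*π), t θ * (σ θ : ℂ) = 0 := by
      have hterm : ∀ k ∈ Finset.Icc (-(N:ℤ)) (N:ℤ),
          IntervalIntegrable (fun θ : ℝ => c k * Complex.exp ((k:ℂ) * (θ:ℂ) * Complex.I) * (σ θ : ℂ)) volume 0 (2*π) := by
        intro k _
        refine bdd_intervalIntegrableC
          (f := fun θ : ℝ => c k * Complex.exp ((k:ℂ) * (θ:ℂ) * Complex.I) * ((σ θ : ℝ) : ℂ))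
          ?_ (‖c k‖) ?_ 0 (2*π)
        · exact ((measurable_const.mul (Complex.measurable_exp.comp
            ((measurable_const.mul Complex.measurable_ofReal).mul measurable_const))).mul
            (Complex.measurable_ofReal.comp hσmeas))
        · intro x
          simp only [norm_mul, norm_exp_mul_I, mul_one, Complex.norm_real, Real.norm_eq_abs]
          calc ‖c k‖ * |σ x| ≤ ‖c k‖ * 1 := mul_le_mul_of_nonneg_left (hσabs x) (norm_nonneg _)
            _ = ‖c k‖ := mul_one _
      have : (fun θ : ℝ => t θ * (σ θ : ℂ)) = fun θ : ℝ =>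
          ∑ k ∈ Finset.Icc (-(N:ℤ)) (N:ℤ), c k * Complex.exp ((k:ℂ) * (θ:ℂ) * Complex.I) * (σ θ : ℂ) := by
        funext θ
        rw [htdef]
        rw [Finset.sum_mul]
      rw [this, intervalIntegral.integral_finset_sum hterm]
      apply Finset.sum_eq_zero
      intro k hk
      have hkabs : |k| < (n:ℤ) := by
        rw [Finset.mem_Icc] at hk
        have hN : (N:ℤ) = (n:ℤ) - 1 := by rw [hNdef]; omega
        rw [abs_lt]
        omega
      have hfun2 : (fun θ : ℝ => c k * Complex.exp ((k:ℂ)*(θ:ℂ)*Complex.I) * ((σ θ:ℝ):ℂ))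
          = fun θ : ℝ => c k * (Complex.exp ((k:ℂ)*(θ:ℂ)*Complex.I) * ((σ θ:ℝ):ℂ)) := by
        funext θ; ring
      rw [hfun2, intervalIntegral.integral_const_mul, exp_sgn_integral n hn k hkabs, mul_zero]
    -- duality
    have hIsub : ∫ θ in (0:ℝ)..(2*π), (fC θ - t θ) * (σ θ : ℂ) = ((2*π : ℝ) : ℂ) := by
      have hfun : (fun θ : ℝ => (fC θ - t θ) * (σ θ : ℂ))
          = fun θ : ℝ => fC θ * (σ θ : ℂ) - t θ * (σ θ : ℂ) := by
        funext θ; ring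
      rw [hfun, intervalIntegral.integral_sub hintfσ hinttσ, hIfσ, hItσ, sub_zero]
    have hnormle : (2*π : ℝ) ≤ ∫ θ in (0:ℝ)..(2*π), ‖fC θ - t θ‖ := by
      have h1 : ‖∫ θ in (0:ℝ)..(2*π), (fC θ - t θ) * (σ θ : ℂ)‖ = 2*π := by
        rw [hIsub, Complex.norm_real, Real.norm_eq_abs, abs_of_pos two_pi_pos]
      have h2 := intervalIntegral.norm_integral_le_integral_norm
        (f := fun θ : ℝ => (fC θ - t θ) * (σ θ : ℂ)) (μ := volume) two_pi_pos.le
      have h3 : ∫ θ in (0:ℝ)..(2*π), ‖(fC θ - t θ) * (σ θ : ℂ)‖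
          ≤ ∫ θ in (0:ℝ)..(2*π), ‖fC θ - t θ‖ := by
        apply intervalIntegral.integral_mono_on two_pi_pos.le hint2 hint1
        intro x _
        simp only [norm_mul, Complex.norm_real, Real.norm_eq_abs]
        calc ‖fC x - t x‖ * |σ x| ≤ ‖fC x - t x‖ * 1 :=
            mul_le_mul_of_nonneg_left (hσabs x) (norm_nonneg _)
          _ = ‖fC x - t x‖ := mul_one _
      linarith
    show (1:ℝ) ≤ (1/(2*π)) * ∫ φ in (0:ℝ)..(2*π), ‖fC φ - t φ‖
    have h5 : (1/(2*π)) * (2*π) ≤ (1/(2*π)) * ∫ φ in (0:ℝ)..(2*π), ‖fC φ - t φ‖ :=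
      mul_le_mul_of_nonneg_left hnormle (by positivity)
    have h6 : (1/(2*π)) * (2*π) = 1 := by field_simp
    linarith
  -- upper bound : the zero polynomial
  have hzero_mem : (1:ℝ) ∈ (fun t : ℝ → ℂ => L1norm (fun θ => fC θ - t θ)) '' (trigPoly (n-1)) := by
    refine ⟨fun θ : ℝ => ∑ k ∈ Finset.Icc (-((n-1:ℕ):ℤ)) ((n-1:ℕ):ℤ),
      (0:ℂ) * Complex.exp (k * (θ:ℂ) * Complex.I), ⟨fun _ => 0, rfl⟩, ?_⟩
    show L1norm (fun θ : ℝ => fC θ - ∑ k ∈ Finset.Icc (-((n-1:ℕ):ℤ)) ((n-1:ℕ):ℤ),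
        (0:ℂ) * Complex.exp (k * (θ:ℂ) * Complex.I)) = 1
    have hz : (fun θ : ℝ => fC θ - ∑ k ∈ Finset.Icc (-((n-1:ℕ):ℤ)) ((n-1:ℕ):ℤ),
        (0:ℂ) * Complex.exp (k * (θ:ℂ) * Complex.I)) = fC := by
      funext θ; simp
    rw [hz]
    show (1/(2*π)) * (∫ φ in (0:ℝ)..(2*π), ‖fC φ‖) = 1
    have hfeq : (fun θ : ℝ => ‖fC θ‖) = f := funext hfCnorm
    rw [hfeq, hg.intg]
    field_simp
  have hbdd : BddBelow ((fun t : ℝ → ℂ => L1norm (fun θ => fC θ - t θ)) '' (trigPoly (n-1))) := by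
    refine ⟨0, ?_⟩
    rintro y ⟨t, _, rfl⟩
    exact L1norm_nonneg _
  have hne : ((fun t : ℝ → ℂ => L1norm (fun θ => fC θ - t θ)) '' (trigPoly (n-1))).Nonempty :=
    ⟨1, hzero_mem⟩
  unfold bestApprox
  exact le_antisymm (csInf_le hbdd hzero_mem) (le_csInf hne hmain)
end
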